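/- arXiv:1308.4223 — 4 statements merged into one kernel-verified Lean document; each statement's English description precedes it below -/
import Mathlib

section
/- Let X and Y be m × m complex matrices, M = diag(I, 2I, 3I) (blocks of size m), N_X the 3m × 2m block matrix with block rows [I, 0], [I, I], [I, X], and N_Y defined analogously with Y in place of X. Then there exist unitary matrices S₁, S₂ (of size 3m) and S₃ (of size 2m) with S₂⁻¹ M S₁ = M and S₂⁻¹ N_X S₃ = N_Y if and only if X and Y are unitarily similar, i.e., there exists a unitary m × m matrix C with C⁻¹ X C = Y. -/
/-- The block-diagonal matrix `diag(I_m, 2 I_m, 3 I_m)`. -/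
noncomputable def Mblk (m : ℕ) : Matrix (Fin 3 × Fin m) (Fin 3 × Fin m) ℂ :=
  Matrix.kroneckerMap (· * ·) (Matrix.diagonal ![1, 2, 3]) (1 : Matrix (Fin m) (Fin m) ℂ)

/-- The 3m × 2m block matrix with block rows [I 0], [I I], [I X]. -/
noncomputable def Nblk (m : ℕ) (X : Matrix (Fin m) (Fin m) ℂ) :
    Matrix (Fin 3 × Fin m) (Fin 2 × Fin m) ℂ :=
  Matrix.of fun p q =>
    (![![(1 : Matrix (Fin m) (Fin m) ℂ), 0], ![1, 1], ![1, X]] p.1 q.1) p.2 q.2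

open Matrix

lemma Mblk_eq (m : ℕ) : Mblk m = Matrix.diagonal (fun p : Fin 3 × Fin m => ![(1:ℂ),2,3] p.1) := by
  ext ⟨i,a⟩ ⟨j,b⟩
  simp [Mblk, Matrix.diagonal_apply, Matrix.one_apply, Prod.ext_iff]
  split_ifs <;> simp_all

lemma star_Mblk (m : ℕ) : star (Mblk m) = Mblk m := by
  rw [Mblk_eq, Matrix.star_eq_conjTranspose, Matrix.diagonal_conjTranspose]
  have : (star fun p : Fin 3 × Fin m => ![(1:ℂ),2,3] p.1)
      = fun p : Fin 3 × Fin m => ![(1:ℂ),2,3] p.1 := by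
    funext p
    obtain ⟨i, _⟩ := p
    fin_cases i <;> simp
  rw [this]

lemma dvec_ne_zero (i : Fin 3) : (![(1:ℂ),2,3] i) ≠ 0 := by fin_cases i <;> norm_num

lemma dvec_sq_ne {i j : Fin 3} (h : i ≠ j) :
    (![(1:ℂ),2,3] i) * ![(1:ℂ),2,3] i ≠ ![(1:ℂ),2,3] j * ![(1:ℂ),2,3] j := by
  fin_cases i <;> fin_cases j <;> simp_all <;> norm_num

lemma star_one_kron {n : ℕ} {m : ℕ} (C : Matrix (Fin m) (Fin m) ℂ) :
    star (Matrix.kroneckerMap (· * ·) (1 : Matrix (Fin n) (Fin n) ℂ) C)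
      = Matrix.kroneckerMap (· * ·) (1 : Matrix (Fin n) (Fin n) ℂ) (star C) := by
  ext ⟨i,a⟩ ⟨j,b⟩
  simp [Matrix.star_eq_conjTranspose, Matrix.conjTranspose_apply, Matrix.one_apply, eq_comm]
  split_ifs <;> simp

theorem stmt_9 {m : ℕ} (X Y : Matrix (Fin m) (Fin m) ℂ) :
    (∃ (S₁ S₂ : Matrix (Fin 3 × Fin m) (Fin 3 × Fin m) ℂ)
        (S₃ : Matrix (Fin 2 × Fin m) (Fin 2 × Fin m) ℂ),
      S₁ ∈ Matrix.unitaryGroup (Fin 3 × Fin m) ℂ ∧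
      S₂ ∈ Matrix.unitaryGroup (Fin 3 × Fin m) ℂ ∧
      S₃ ∈ Matrix.unitaryGroup (Fin 2 × Fin m) ℂ ∧
      S₂⁻¹ * Mblk m * S₁ = Mblk m ∧ S₂⁻¹ * Nblk m X * S₃ = Nblk m Y) ↔
    (∃ C ∈ Matrix.unitaryGroup (Fin m) ℂ, C⁻¹ * X * C = Y) := by
  constructor
  · rintro ⟨S₁, S₂, S₃, h1, h2, h3, hM, hN⟩
    have h1' := Matrix.mem_unitaryGroup_iff.mp h1
    have h2' := Matrix.mem_unitaryGroup_iff.mp h2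
    have h2'' := Matrix.mem_unitaryGroup_iff'.mp h2
    have h3' := Matrix.mem_unitaryGroup_iff.mp h3
    have h3'' := Matrix.mem_unitaryGroup_iff'.mp h3
    have hS2inv : S₂⁻¹ = star S₂ := Matrix.inv_eq_left_inv h2''
    rw [hS2inv] at hM hN
    have hM1 : Mblk m * S₁ = S₂ * Mblk m := by
      calc Mblk m * S₁ = (S₂ * star S₂) * (Mblk m * S₁) := by rw [h2', one_mul]
        _ = S₂ * (star S₂ * Mblk m * S₁) := by simp only [mul_assoc]
        _ = S₂ * Mblk m := by rw [hM]
    have hM2 : star S₁ * Mblk m = Mblk m * star S₂ := by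
      have h := congrArg star hM1
      rwa [StarMul.star_mul, StarMul.star_mul, star_Mblk] at h
    have hcomm : Mblk m * Mblk m * S₁ = S₁ * (Mblk m * Mblk m) := by
      have key : star S₁ * (Mblk m * Mblk m * S₁) = Mblk m * Mblk m := by
        calc star S₁ * (Mblk m * Mblk m * S₁)
            = (star S₁ * Mblk m) * (Mblk m * S₁) := by simp only [mul_assoc]
          _ = (Mblk m * star S₂) * (S₂ * Mblk m) := by rw [hM2, hM1]
          _ = Mblk m * (star S₂ * S₂) * Mblk m := by simp only [mul_assoc]
          _ = Mblk m * Mblk m := by rw [h2'']; simp only [mul_one, one_mul, mul_assoc]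
      calc Mblk m * Mblk m * S₁
          = (S₁ * star S₁) * (Mblk m * Mblk m * S₁) := by rw [h1', one_mul]
        _ = S₁ * (star S₁ * (Mblk m * Mblk m * S₁)) := by simp only [mul_assoc]
        _ = S₁ * (Mblk m * Mblk m) := by rw [key]
    have hS₁0 : ∀ p q : Fin 3 × Fin m, p.1 ≠ q.1 → S₁ p q = 0 := by
      intro p q hpq
      have h : (Mblk m * Mblk m * S₁) p q = (S₁ * (Mblk m * Mblk m)) p q := by rw [hcomm]
      rw [Mblk_eq, Matrix.diagonal_mul_diagonal] at h
      rw [Matrix.diagonal_mul, Matrix.mul_diagonal] at h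
      have hz : S₁ p q * (![(1:ℂ),2,3] p.1 * ![(1:ℂ),2,3] p.1
          - ![(1:ℂ),2,3] q.1 * ![(1:ℂ),2,3] q.1) = 0 := by linear_combination h
      rcases mul_eq_zero.mp hz with h0 | h0
      · exact h0
      · exact absurd (sub_eq_zero.mp h0) (dvec_sq_ne hpq)
    have hS21 : S₂ = S₁ := by
      ext p q
      have h : (Mblk m * S₁) p q = (S₂ * Mblk m) p q := by rw [hM1]
      rw [Mblk_eq] at h
      rw [Matrix.diagonal_mul, Matrix.mul_diagonal] at h
      by_cases hpq : p.1 = q.1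
      · rw [hpq] at h
        have h' : ![(1:ℂ),2,3] q.1 * S₂ p q = ![(1:ℂ),2,3] q.1 * S₁ p q := by
          linear_combination -h
        exact mul_left_cancel₀ (dvec_ne_zero q.1) h'
      · have h0 := hS₁0 p q hpq
        rw [h0, mul_zero] at h
        rcases mul_eq_zero.mp h.symm with h' | h'
        · rw [h', h0]
        · exact absurd h' (dvec_ne_zero q.1)
    rw [hS21] at hN
    have hN1 : Nblk m X * S₃ = S₁ * Nblk m Y := by
      calc Nblk m X * S₃ = (S₁ * star S₁) * (Nblk m X * S₃) := by
            rw [h1', Matrix.one_mul]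
        _ = S₁ * (star S₁ * Nblk m X * S₃) := by
            rw [Matrix.mul_assoc, Matrix.mul_assoc]
        _ = S₁ * Nblk m Y := by rw [hN]
    -- off-diagonal blocks of S₁ vanish
    have z01 : ∀ a c : Fin m, S₁ ((0:Fin 3),a) ((1:Fin 3),c) = 0 :=
      fun a c => hS₁0 ((0:Fin 3),a) ((1:Fin 3),c) (show (0:Fin 3) ≠ (1:Fin 3) by decide)
    have z02 : ∀ a c : Fin m, S₁ ((0:Fin 3),a) ((2:Fin 3),c) = 0 :=
      fun a c => hS₁0 ((0:Fin 3),a) ((2:Fin 3),c) (show (0:Fin 3) ≠ (2:Fin 3) by decide)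
    have z10 : ∀ a c : Fin m, S₁ ((1:Fin 3),a) ((0:Fin 3),c) = 0 :=
      fun a c => hS₁0 ((1:Fin 3),a) ((0:Fin 3),c) (show (1:Fin 3) ≠ (0:Fin 3) by decide)
    have z12 : ∀ a c : Fin m, S₁ ((1:Fin 3),a) ((2:Fin 3),c) = 0 :=
      fun a c => hS₁0 ((1:Fin 3),a) ((2:Fin 3),c) (show (1:Fin 3) ≠ (2:Fin 3) by decide)
    have z20 : ∀ a c : Fin m, S₁ ((2:Fin 3),a) ((0:Fin 3),c) = 0 :=
      fun a c => hS₁0 ((2:Fin 3),a) ((0:Fin 3),c) (show (2:Fin 3) ≠ (0:Fin 3) by decide)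
    have z21 : ∀ a c : Fin m, S₁ ((2:Fin 3),a) ((1:Fin 3),c) = 0 :=
      fun a c => hS₁0 ((2:Fin 3),a) ((1:Fin 3),c) (show (2:Fin 3) ≠ (1:Fin 3) by decide)
    have entry : ∀ (i : Fin 3) (j : Fin 2) (a b : Fin m),
        ∑ k : Fin 2, ∑ c, Nblk m X (i,a) (k,c) * S₃ (k,c) (j,b)
          = ∑ k : Fin 3, ∑ c, S₁ (i,a) (k,c) * Nblk m Y (k,c) (j,b) := by
      intro i j a b
      have h : (Nblk m X * S₃) (i,a) (j,b) = (S₁ * Nblk m Y) (i,a) (j,b) := by rw [hN1]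
      simpa [Matrix.mul_apply, Fintype.sum_prod_type] using h
    have eB : ∀ a b : Fin m, S₃ ((0:Fin 2),a) ((1:Fin 2),b) = 0 := by
      intro a b
      have h := entry 0 1 a b
      simpa [Nblk, Matrix.one_apply, z01, z02, Fin.sum_univ_three, Fin.sum_univ_two] using h
    set Cm : Matrix (Fin m) (Fin m) ℂ :=
      Matrix.of (fun a b => S₃ ((0:Fin 2),a) ((0:Fin 2),b)) with hCm
    have hCC : Cm * Cmᴴ = 1 := by
      ext a b
      have h : (S₃ * star S₃) ((0:Fin 2),a) ((0:Fin 2),b)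
          = (1 : Matrix (Fin 2 × Fin m) (Fin 2 × Fin m) ℂ) ((0:Fin 2),a) ((0:Fin 2),b) := by
        rw [h3']
      simp only [Matrix.mul_apply, Fintype.sum_prod_type, Fin.sum_univ_two,
        Matrix.star_eq_conjTranspose, Matrix.conjTranspose_apply, eB, map_zero, mul_zero,
        Finset.sum_const_zero, add_zero, Matrix.one_apply, Prod.mk.injEq, true_and] at h
      simpa [Matrix.mul_apply, hCm, Matrix.conjTranspose_apply, Matrix.one_apply] using h
    have hCC' : Cmᴴ * Cm = 1 := mul_eq_one_comm.mp hCC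
    have eC : ∀ c a : Fin m, S₃ ((1:Fin 2),c) ((0:Fin 2),a) = 0 := by
      intro c a
      have h : (star S₃ * S₃) ((0:Fin 2),a) ((0:Fin 2),a)
          = (1 : Matrix (Fin 2 × Fin m) (Fin 2 × Fin m) ℂ) ((0:Fin 2),a) ((0:Fin 2),a) := by
        rw [h3'']
      simp only [Matrix.mul_apply, Fintype.sum_prod_type, Fin.sum_univ_two,
        Matrix.star_eq_conjTranspose, Matrix.conjTranspose_apply, Matrix.one_apply_eq, Complex.star_def] at h
      have hA : ∑ c, (starRingEnd ℂ) (S₃ ((0:Fin 2),c) ((0:Fin 2),a))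
          * S₃ ((0:Fin 2),c) ((0:Fin 2),a) = 1 := by
        have h2 : (Cmᴴ * Cm) a a = (1 : Matrix (Fin m) (Fin m) ℂ) a a := by rw [hCC']
        simpa [Matrix.mul_apply, Matrix.conjTranspose_apply, hCm] using h2
      have hsum : ∑ c, (starRingEnd ℂ) (S₃ ((1:Fin 2),c) ((0:Fin 2),a))
          * S₃ ((1:Fin 2),c) ((0:Fin 2),a) = 0 := by linear_combination h - hA
      have hsum' : ∑ c, (Complex.normSq (S₃ ((1:Fin 2),c) ((0:Fin 2),a)) : ℂ) = 0 := by
        simpa [Complex.normSq_eq_conj_mul_self] using hsum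
      have hsumR : ∑ c, Complex.normSq (S₃ ((1:Fin 2),c) ((0:Fin 2),a)) = 0 := by
        exact_mod_cast hsum'
      have hz := (Finset.sum_eq_zero_iff_of_nonneg
        (fun i _ => Complex.normSq_nonneg _)).mp hsumR c (Finset.mem_univ c)
      exact Complex.normSq_eq_zero.mp hz
    have eU1 : ∀ a b : Fin m, S₃ ((0:Fin 2),a) ((0:Fin 2),b) = S₁ ((1:Fin 3),a) ((1:Fin 3),b) := by
      intro a b
      have h := entry 1 0 a b
      simpa [Nblk, Matrix.one_apply, z10, z12, eC, Fin.sum_univ_three, Fin.sum_univ_two] using h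
    have eD : ∀ a b : Fin m, S₃ ((1:Fin 2),a) ((1:Fin 2),b) = S₁ ((1:Fin 3),a) ((1:Fin 3),b) := by
      intro a b
      have h := entry 1 1 a b
      simpa [Nblk, Matrix.one_apply, z10, z12, eB, Fin.sum_univ_three, Fin.sum_univ_two] using h
    have eU2 : ∀ a b : Fin m, S₁ ((2:Fin 3),a) ((2:Fin 3),b) = S₃ ((0:Fin 2),a) ((0:Fin 2),b) := by
      intro a b
      have h := entry 2 0 a b
      simp only [Nblk] at h
      simpa [Matrix.one_apply, z20, z21, eC, Fin.sum_univ_three, Fin.sum_univ_two,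
        eq_comm] using h
    have eXY : ∀ a b : Fin m, ∑ c, X a c * S₃ ((1:Fin 2),c) ((1:Fin 2),b)
        = ∑ c, S₁ ((2:Fin 3),a) ((2:Fin 3),c) * Y c b := by
      intro a b
      have h := entry 2 1 a b
      simpa [Nblk, Matrix.one_apply, z20, z21, eB, Fin.sum_univ_three, Fin.sum_univ_two] using h
    have hXC : X * Cm = Cm * Y := by
      ext a b
      simp only [Matrix.mul_apply, hCm, Matrix.of_apply]
      have h := eXY a b
      simp only [eD, eU2, eU1] at h ⊢
      exact h
    refine ⟨Cm, ?_, ?_⟩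
    · rw [Matrix.mem_unitaryGroup_iff, Matrix.star_eq_conjTranspose]
      exact hCC
    · have hinv : Cm⁻¹ = Cmᴴ := Matrix.inv_eq_left_inv hCC'
      rw [hinv]
      calc Cmᴴ * X * Cm = Cmᴴ * (X * Cm) := by rw [Matrix.mul_assoc]
        _ = Cmᴴ * (Cm * Y) := by rw [hXC]
        _ = (Cmᴴ * Cm) * Y := by rw [Matrix.mul_assoc]
        _ = Y := by rw [hCC', Matrix.one_mul]
  · rintro ⟨C, hC, hXY⟩
    have hC1 := Matrix.mem_unitaryGroup_iff.mp hC
    have hC2 := Matrix.mem_unitaryGroup_iff'.mp hC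
    have hCinv : C⁻¹ = star C := Matrix.inv_eq_left_inv hC2
    rw [hCinv] at hXY
    have hXC : X * C = C * Y := by
      calc X * C = (C * star C) * X * C := by rw [hC1, one_mul]
        _ = C * (star C * X * C) := by simp only [mul_assoc]
        _ = C * Y := by rw [hXY]
    have hXCe : ∀ a b, ∑ c, X a c * C c b = ∑ c, C a c * Y c b := by
      intro a b
      have h : (X * C) a b = (C * Y) a b := by rw [hXC]
      simpa [Matrix.mul_apply] using h
    set K3 : Matrix (Fin 3 × Fin m) (Fin 3 × Fin m) ℂ :=
      Matrix.kroneckerMap (· * ·) (1 : Matrix (Fin 3) (Fin 3) ℂ) C with hK3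
    set K2 : Matrix (Fin 2 × Fin m) (Fin 2 × Fin m) ℂ :=
      Matrix.kroneckerMap (· * ·) (1 : Matrix (Fin 2) (Fin 2) ℂ) C with hK2
    have hK3u : star K3 * K3 = 1 := by
      rw [hK3, star_one_kron, ← Matrix.mul_kronecker_mul, hC2, Matrix.one_mul,
        Matrix.one_kronecker_one]
    have hK2u : star K2 * K2 = 1 := by
      rw [hK2, star_one_kron, ← Matrix.mul_kronecker_mul, hC2, Matrix.one_mul,
        Matrix.one_kronecker_one]
    have hK3inv : K3⁻¹ = star K3 := Matrix.inv_eq_left_inv hK3u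
    refine ⟨K3, K3, K2, Matrix.mem_unitaryGroup_iff'.mpr hK3u,
      Matrix.mem_unitaryGroup_iff'.mpr hK3u, Matrix.mem_unitaryGroup_iff'.mpr hK2u, ?_, ?_⟩
    · rw [hK3inv, hK3, star_one_kron, Mblk]
      rw [← Matrix.mul_kronecker_mul, ← Matrix.mul_kronecker_mul]
      rw [Matrix.one_mul, Matrix.mul_one, Matrix.mul_one, hC2]
    · have hNS : Nblk m X * K2 = K3 * Nblk m Y := by
        ext ⟨i,a⟩ ⟨j,b⟩
        fin_cases i <;> fin_cases j <;>
          simp [Matrix.mul_apply, Fintype.sum_prod_type, Matrix.kroneckerMap_apply,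
            Matrix.one_apply, Fin.sum_univ_two, Fin.sum_univ_three, Nblk, hXCe, hK2, hK3]
      rw [hK3inv]
      calc star K3 * Nblk m X * K2 = star K3 * (Nblk m X * K2) := by rw [Matrix.mul_assoc]
        _ = star K3 * (K3 * Nblk m Y) := by rw [hNS]
        _ = (star K3 * K3) * Nblk m Y := by rw [Matrix.mul_assoc]
        _ = Nblk m Y := by rw [hK3u, Matrix.one_mul]
end

section
/- Let A : U₁ → U₂ and B : U₃ → U₂ be linear maps of finite-dimensional vector spaces over a field F (a chain U₁ → U₂ ← U₃). Then the representation (U₁, U₂, U₃, A, B) decomposes as a direct sum of indecomposable subrepresentations, each of which is isomorphic to one of the representations L₁₁ = (F,0,0), L₂₂ = (0,F,0), L₃₃ = (0,0,F), L₁₂ = (F→F, 0) with identity map, L₂₃ = (0, F←F) with identity map, or L₁₃ = (F→F←F) with both maps the identity. -/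
open Submodule Set

section helpers
variable {F M N : Type*} [Field F] [AddCommGroup M] [Module F M]
  [AddCommGroup N] [Module F N]

lemma map_span_single (f : M →ₗ[F] N) (x : M) :
    Submodule.map f (F ∙ x) = F ∙ f x := by
  rw [Submodule.map_span, Set.image_singleton]

lemma exists_relCompl (p q : Submodule F M) (h : p ≤ q) :
    ∃ r : Submodule F M, r ≤ q ∧ p ⊓ r = ⊥ ∧ p ⊔ r = q := by
  obtain ⟨r', hr'⟩ := Submodule.exists_isCompl (p.comap q.subtype)
  refine ⟨r'.map q.subtype, Submodule.map_subtype_le _ _, ?_, ?_⟩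
  · rw [eq_bot_iff]
    rintro a ⟨hap, b, hb, rfl⟩
    have : b ∈ p.comap q.subtype ⊓ r' := ⟨hap, hb⟩
    rw [hr'.inf_eq_bot] at this
    simpa using this
  · apply le_antisymm (sup_le h (Submodule.map_subtype_le _ _))
    intro a ha
    have : (⟨a, ha⟩ : q) ∈ (p.comap q.subtype) ⊔ r' := by rw [hr'.sup_eq_top]; trivial
    obtain ⟨u, hu, v, hv, huv⟩ := Submodule.mem_sup.mp this
    refine Submodule.mem_sup.mpr ⟨u, hu, v, ⟨v, hv, rfl⟩, ?_⟩
    exact congrArg Subtype.val huv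

lemma sub_basis [FiniteDimensional F M] (p : Submodule F M) :
    ∃ vv : Fin (Module.finrank F p) → M, LinearIndependent F vv ∧
      Submodule.span F (Set.range vv) = p := by
  set b := Module.finBasis F p
  refine ⟨fun k => (b k : M), b.linearIndependent.map' p.subtype p.ker_subtype, ?_⟩
  have : Set.range (fun k => (b k : M)) = p.subtype '' Set.range b := by
    rw [← Set.range_comp]; rfl
  rw [this, ← Submodule.map_span, b.span_eq, Submodule.map_top, Submodule.range_subtype]

lemma internal_helper {ι κ : Type*} [DecidableEq ι] (v : κ → M) (hli : LinearIndependent F v)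
    (hsp : Submodule.span F (Set.range v) = ⊤) (c : ι → Option κ)
    (hex : ∀ k, ∃ i, c i = some k)
    (hinj : ∀ i j k, c i = some k → c j = some k → i = j) :
    DirectSum.IsInternal (fun i => (c i).elim ⊥ (fun k => F ∙ v k)) := by
  rw [DirectSum.isInternal_submodule_iff_iSupIndep_and_iSup_eq_top]
  constructor
  · rw [iSupIndep_def]
    intro i
    cases hci : c i with
    | none => simp [hci]
    | some k =>
      have hind := hli.iSupIndep_span_singleton
      have h1 : (⨆ (j) (_ : j ≠ i), (c j).elim ⊥ (fun k => F ∙ v k)) ≤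
          ⨆ (k') (_ : k' ≠ k), F ∙ v k' := by
        refine iSup_le fun j => iSup_le fun hj => ?_
        cases hcj : c j with
        | none => simp
        | some k' =>
          have hkk : k' ≠ k := fun h => hj (hinj j i k (h ▸ hcj) hci)
          exact le_iSup_of_le k' (le_iSup_of_le hkk le_rfl)
      have := (iSupIndep_def.mp hind k).mono_right h1
      simpa [hci] using this
  · apply le_antisymm le_top
    rw [← hsp, Submodule.span_range_eq_iSup]
    refine iSup_le fun k => ?_
    obtain ⟨i, hi⟩ := hex k
    exact le_iSup_of_le i (by rw [hi]; exact le_rfl)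

end helpers
section vertex
variable {F M N : Type*} [Field F] [AddCommGroup M] [Module F M]
  [AddCommGroup N] [Module F N]

lemma vertex_decomp [FiniteDimensional F M] (T : M →ₗ[F] N) {κ : Type*} (ev : κ → N)
    (hev : LinearIndependent F ev)
    (hspan : Submodule.span F (Set.range ev) = LinearMap.range T) :
    ∃ (x : κ → M) (pker : Fin (Module.finrank F (LinearMap.ker T)) → M),
      (∀ k, T (x k) = ev k) ∧
      LinearIndependent F (Sum.elim x pker) ∧
      Submodule.span F (Set.range (Sum.elim x pker)) = ⊤ ∧
      (∀ a, pker a ∈ LinearMap.ker T) := by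
  obtain ⟨V, hV⟩ := Submodule.exists_isCompl (LinearMap.ker T)
  set φ : V →ₗ[F] N := T ∘ₗ V.subtype with hφ
  have hφinj : Function.Injective φ := by
    rw [← LinearMap.ker_eq_bot, eq_bot_iff]
    rintro ⟨a, haV⟩ ha
    have : a ∈ LinearMap.ker T ⊓ V := ⟨ha, haV⟩
    rw [hV.inf_eq_bot] at this
    simpa using this
  have hφrange : LinearMap.range φ = LinearMap.range T := by
    rw [hφ, LinearMap.range_comp, Submodule.range_subtype]
    apply le_antisymm (LinearMap.map_le_range)
    rintro b ⟨a, rfl⟩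
    have : a ∈ LinearMap.ker T ⊔ V := by rw [hV.sup_eq_top]; trivial
    obtain ⟨u, hu, v, hv, rfl⟩ := Submodule.mem_sup.mp this
    refine ⟨v, hv, ?_⟩
    simp [LinearMap.mem_ker.mp hu]
  set e' : V ≃ₗ[F] LinearMap.range T :=
    (LinearEquiv.ofInjective φ hφinj).trans (LinearEquiv.ofEq _ _ hφrange) with he'
  have he'coe : ∀ a : V, (e' a : N) = T a := by intro a; simp [he', φ]
  set u : κ → LinearMap.range T := fun k =>
    ⟨ev k, hspan ▸ Submodule.subset_span (Set.mem_range_self k)⟩ with hu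
  have hucoe : ∀ k, ((u k : N)) = ev k := fun k => rfl
  set x : κ → M := fun k => ((e'.symm (u k) : V) : M) with hx
  have hTx : ∀ k, T (x k) = ev k := by
    intro k
    rw [hx]
    have := he'coe (e'.symm (u k))
    rw [e'.apply_symm_apply] at this
    rw [← this, hucoe]
  set ψ : V →ₗ[F] M := V.subtype with hψ
  set χ : LinearMap.range T →ₗ[F] M := ψ ∘ₗ (e'.symm : LinearMap.range T →ₗ[F] V) with hχ
  have hχinj : Function.Injective χ := by
    rw [hχ, LinearMap.coe_comp, LinearEquiv.coe_coe]
    exact Function.Injective.comp (Submodule.injective_subtype V) e'.symm.injective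
  have huli : LinearIndependent F u := by
    apply LinearIndependent.of_comp (LinearMap.range T).subtype
    convert hev
    exact funext fun k => rfl
  have hxli : LinearIndependent F x := huli.map' χ (LinearMap.ker_eq_bot.mpr hχinj)
  have huspan : Submodule.span F (Set.range u) = ⊤ := by
    apply Submodule.map_injective_of_injective (Submodule.injective_subtype (LinearMap.range T))
    rw [Submodule.map_span, Submodule.map_top, Submodule.range_subtype, ← Set.range_comp]
    exact hspan
  have hxspan : Submodule.span F (Set.range x) = V := by
    have : Set.range x = χ '' Set.range u := by rw [← Set.range_comp]; rfl
    rw [this, ← Submodule.map_span, huspan, Submodule.map_top, hχ, LinearMap.range_comp,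
      LinearEquiv.range, Submodule.map_top, hψ, Submodule.range_subtype]
  obtain ⟨pker, hpli, hpspan⟩ := sub_basis (LinearMap.ker T)
  refine ⟨x, pker, hTx, ?_, ?_, ?_⟩
  · refine hxli.sum_type hpli ?_
    rw [hxspan, hpspan]
    exact hV.disjoint.symm
  · rw [Set.Sum.elim_range, Submodule.span_union, hxspan, hpspan, sup_comm, hV.sup_eq_top]
  · intro a
    rw [← hpspan]
    exact Submodule.subset_span (Set.mem_range_self a)

end vertex
def cOne {K J M R KA KB : Type} : K ⊕ (J ⊕ (M ⊕ (R ⊕ (KA ⊕ KB)))) → Option ((K ⊕ J) ⊕ KA)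
  | .inl k => some (.inl (.inl k))
  | .inr (.inl j) => some (.inl (.inr j))
  | .inr (.inr (.inl _)) => none
  | .inr (.inr (.inr (.inl _))) => none
  | .inr (.inr (.inr (.inr (.inl a)))) => some (.inr a)
  | .inr (.inr (.inr (.inr (.inr _)))) => none

def cTwo {K J M R KA KB : Type} : K ⊕ (J ⊕ (M ⊕ (R ⊕ (KA ⊕ KB)))) → Option (K ⊕ (J ⊕ (M ⊕ R)))
  | .inl k => some (.inl k)
  | .inr (.inl j) => some (.inr (.inl j))
  | .inr (.inr (.inl m)) => some (.inr (.inr (.inl m)))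
  | .inr (.inr (.inr (.inl r))) => some (.inr (.inr (.inr r)))
  | .inr (.inr (.inr (.inr (.inl _)))) => none
  | .inr (.inr (.inr (.inr (.inr _)))) => none

def cThree {K J M R KA KB : Type} : K ⊕ (J ⊕ (M ⊕ (R ⊕ (KA ⊕ KB)))) → Option ((K ⊕ M) ⊕ KB)
  | .inl k => some (.inl (.inl k))
  | .inr (.inl _) => none
  | .inr (.inr (.inl m)) => some (.inl (.inr m))
  | .inr (.inr (.inr (.inl _))) => none
  | .inr (.inr (.inr (.inr (.inl _)))) => none
  | .inr (.inr (.inr (.inr (.inr b)))) => some (.inr b)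

variable {K J M R KA KB : Type}

lemma cOne_ex : ∀ k : (K ⊕ J) ⊕ KA, ∃ i, cOne (M := M) (R := R) (KB := KB) i = some k := by
  rintro ((k | j) | a)
  exacts [⟨.inl k, rfl⟩, ⟨.inr (.inl j), rfl⟩, ⟨.inr (.inr (.inr (.inr (.inl a)))), rfl⟩]

lemma cOne_inj : ∀ i j (k : (K ⊕ J) ⊕ KA), cOne (M := M) (R := R) (KB := KB) i = some k →
    cOne j = some k → i = j := by
  rintro (k | j | m | r | a | b) (k' | j' | m' | r' | a' | b') kk h1 h2 <;> simp_all [cOne] <;> (subst h1; simp_all)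

lemma cTwo_ex : ∀ k : K ⊕ (J ⊕ (M ⊕ R)), ∃ i, cTwo (KA := KA) (KB := KB) i = some k := by
  rintro (k | j | m | r)
  exacts [⟨.inl k, rfl⟩, ⟨.inr (.inl j), rfl⟩, ⟨.inr (.inr (.inl m)), rfl⟩,
    ⟨.inr (.inr (.inr (.inl r))), rfl⟩]

lemma cTwo_inj : ∀ i j (k : K ⊕ (J ⊕ (M ⊕ R))), cTwo (KA := KA) (KB := KB) i = some k →
    cTwo j = some k → i = j := by
  rintro (k | j | m | r | a | b) (k' | j' | m' | r' | a' | b') kk h1 h2 <;> simp_all [cTwo] <;> (subst h1; simp_all)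

lemma cThree_ex : ∀ k : (K ⊕ M) ⊕ KB, ∃ i, cThree (J := J) (R := R) (KA := KA) i = some k := by
  rintro ((k | m) | b)
  exacts [⟨.inl k, rfl⟩, ⟨.inr (.inr (.inl m)), rfl⟩, ⟨.inr (.inr (.inr (.inr (.inr b)))), rfl⟩]

lemma cThree_inj : ∀ i j (k : (K ⊕ M) ⊕ KB), cThree (J := J) (R := R) (KA := KA) i = some k →
    cThree j = some k → i = j := by
  rintro (k | j | m | r | a | b) (k' | j' | m' | r' | a' | b') kk h1 h2 <;> simp_all [cThree] <;> (subst h1; simp_all)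

set_option maxHeartbeats 1000000 in

theorem stmt_11 {F : Type*} [Field F] {U₁ U₂ U₃ : Type*}
    [AddCommGroup U₁] [Module F U₁] [FiniteDimensional F U₁]
    [AddCommGroup U₂] [Module F U₂] [FiniteDimensional F U₂]
    [AddCommGroup U₃] [Module F U₃] [FiniteDimensional F U₃]
    (A : U₁ →ₗ[F] U₂) (B : U₃ →ₗ[F] U₂) :
    ∃ (ι : Type) (_ : Fintype ι) (_ : DecidableEq ι)
      (W₁ : ι → Submodule F U₁) (W₂ : ι → Submodule F U₂) (W₃ : ι → Submodule F U₃),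
      DirectSum.IsInternal W₁ ∧ DirectSum.IsInternal W₂ ∧ DirectSum.IsInternal W₃ ∧
      (∀ i, Submodule.map A (W₁ i) ≤ W₂ i) ∧
      (∀ i, Submodule.map B (W₃ i) ≤ W₂ i) ∧
      ∀ i,
        -- L₁₁ : (F, 0, 0)
        (Module.finrank F (W₁ i) = 1 ∧ W₂ i = ⊥ ∧ W₃ i = ⊥) ∨
        -- L₂₂ : (0, F, 0)
        (W₁ i = ⊥ ∧ Module.finrank F (W₂ i) = 1 ∧ W₃ i = ⊥) ∨
        -- L₃₃ : (0, 0, F)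
        (W₁ i = ⊥ ∧ W₂ i = ⊥ ∧ Module.finrank F (W₃ i) = 1) ∨
        -- L₁₂ : (F → F, 0) with identity map
        (Module.finrank F (W₁ i) = 1 ∧ Module.finrank F (W₂ i) = 1 ∧ W₃ i = ⊥ ∧
          Submodule.map A (W₁ i) = W₂ i) ∨
        -- L₂₃ : (0, F ← F) with identity map
        (W₁ i = ⊥ ∧ Module.finrank F (W₂ i) = 1 ∧ Module.finrank F (W₃ i) = 1 ∧
          Submodule.map B (W₃ i) = W₂ i) ∨
        -- L₁₃ : (F → F ← F) with both maps the identity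
        (Module.finrank F (W₁ i) = 1 ∧ Module.finrank F (W₂ i) = 1 ∧
          Module.finrank F (W₃ i) = 1 ∧
          Submodule.map A (W₁ i) = W₂ i ∧ Submodule.map B (W₃ i) = W₂ i) := by
  classical
  obtain ⟨YA, hYAle, hYAint, hYAsup⟩ :=
    exists_relCompl (LinearMap.range A ⊓ LinearMap.range B) (LinearMap.range A) inf_le_left
  obtain ⟨YB, hYBle, hYBint, hYBsup⟩ :=
    exists_relCompl (LinearMap.range A ⊓ LinearMap.range B) (LinearMap.range B) inf_le_right
  obtain ⟨Y0, hY0⟩ := Submodule.exists_isCompl (LinearMap.range A ⊔ LinearMap.range B)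
  obtain ⟨e, heli, hespan⟩ := sub_basis (F := F) (LinearMap.range A ⊓ LinearMap.range B)
  obtain ⟨f, hfli, hfspan⟩ := sub_basis YA
  obtain ⟨g, hgli, hgspan⟩ := sub_basis YB
  obtain ⟨h, hhli, hhspan⟩ := sub_basis Y0
  -- disjointness facts
  have djEA : Disjoint (LinearMap.range A ⊓ LinearMap.range B) YA := disjoint_iff.mpr hYAint
  have djEB : Disjoint (LinearMap.range A ⊓ LinearMap.range B) YB := disjoint_iff.mpr hYBint
  have djBH : Disjoint YB Y0 := hY0.disjoint.mono_left (hYBle.trans le_sup_right)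
  have djA_BH : Disjoint YA (YB ⊔ Y0) := by
    rw [disjoint_iff_inf_le]
    rintro a ⟨haA, haBH⟩
    obtain ⟨b, hb, c, hc, rfl⟩ := Submodule.mem_sup.mp haBH
    have hcz : c = 0 := by
      have : c ∈ (LinearMap.range A ⊔ LinearMap.range B) ⊓ Y0 := by
        refine ⟨?_, hc⟩
        have h1 : b + c ∈ LinearMap.range A ⊔ LinearMap.range B :=
          Submodule.mem_sup_left (hYAle haA)
        have h2 : b ∈ LinearMap.range A ⊔ LinearMap.range B := Submodule.mem_sup_right (hYBle hb)
        simpa using sub_mem h1 h2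
      rw [hY0.inf_eq_bot] at this
      simpa using this
    subst hcz
    have : b + 0 ∈ (LinearMap.range A ⊓ LinearMap.range B) ⊓ YB := by
      refine ⟨⟨hYAle haA, ?_⟩, by simpa using hb⟩
      simpa using hYBle hb
    rw [hYBint] at this
    exact this
  have djE_rest : Disjoint (LinearMap.range A ⊓ LinearMap.range B) (YA ⊔ (YB ⊔ Y0)) := by
    rw [disjoint_iff_inf_le]
    rintro a ⟨haE, haRest⟩
    obtain ⟨p, hp, q, hq, rfl⟩ := Submodule.mem_sup.mp haRest
    obtain ⟨s, hs, c, hc, rfl⟩ := Submodule.mem_sup.mp hq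
    have hcz : c = 0 := by
      have : c ∈ (LinearMap.range A ⊔ LinearMap.range B) ⊓ Y0 := by
        refine ⟨?_, hc⟩
        have h1 : p + (s + c) ∈ LinearMap.range A ⊔ LinearMap.range B :=
          Submodule.mem_sup_left haE.1
        have h2 : p ∈ LinearMap.range A ⊔ LinearMap.range B := Submodule.mem_sup_left (hYAle hp)
        have h3 : s ∈ LinearMap.range A ⊔ LinearMap.range B := Submodule.mem_sup_right (hYBle hs)
        have := sub_mem (sub_mem h1 h2) h3
        simpa [add_sub_cancel_left] using this
      rw [hY0.inf_eq_bot] at this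
      simpa using this
    subst hcz
    have hsz : s = 0 := by
      have : s ∈ (LinearMap.range A ⊓ LinearMap.range B) ⊓ YB := by
        refine ⟨⟨?_, hYBle hs⟩, hs⟩
        have h1 : p + (s + 0) ∈ LinearMap.range A := haE.1
        have h2 : p ∈ LinearMap.range A := hYAle hp
        have := sub_mem h1 h2
        simpa using this
      rw [hYBint] at this
      simpa using this
    subst hsz
    have : p ∈ (LinearMap.range A ⊓ LinearMap.range B) ⊓ YA := by
      refine ⟨?_, hp⟩
      simpa using haE
    rw [hYAint] at this
    simpa using this
  -- the U₂ family
  have hli2 : LinearIndependent F (Sum.elim e (Sum.elim f (Sum.elim g h))) := by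
    refine heli.sum_type (hfli.sum_type (hgli.sum_type hhli ?_) ?_) ?_
    · rw [hgspan, hhspan]; exact djBH
    · rw [hfspan, Set.Sum.elim_range, Submodule.span_union, hgspan, hhspan]; exact djA_BH
    · rw [hespan, Set.Sum.elim_range, Submodule.span_union, hfspan,
        Set.Sum.elim_range, Submodule.span_union, hgspan, hhspan]
      exact djE_rest
  have hsp2 : Submodule.span F (Set.range (Sum.elim e (Sum.elim f (Sum.elim g h)))) = ⊤ := by
    rw [Set.Sum.elim_range, Submodule.span_union, hespan, Set.Sum.elim_range,
      Submodule.span_union, hfspan, Set.Sum.elim_range, Submodule.span_union, hgspan, hhspan]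
    rw [eq_top_iff, ← hY0.sup_eq_top]
    refine sup_le (sup_le ?_ ?_) ?_
    · exact hYAsup.ge.trans (sup_le le_sup_left (le_sup_left.trans le_sup_right))
    · exact hYBsup.ge.trans
        (sup_le le_sup_left ((le_sup_left.trans le_sup_right).trans le_sup_right))
    · exact (le_sup_right.trans le_sup_right).trans le_sup_right
  -- the U₁ family
  have hli1' : LinearIndependent F (Sum.elim e f) := by
    refine heli.sum_type hfli ?_
    rw [hespan, hfspan]; exact djEA
  have hsp1' : Submodule.span F (Set.range (Sum.elim e f)) = LinearMap.range A := by
    rw [Set.Sum.elim_range, Submodule.span_union, hespan, hfspan, hYAsup]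
  obtain ⟨xy, p1, hAxy, hli1, hsp1, hk1⟩ := vertex_decomp A (Sum.elim e f) hli1' hsp1'
  -- the U₃ family
  have hli3' : LinearIndependent F (Sum.elim e g) := by
    refine heli.sum_type hgli ?_
    rw [hespan, hgspan]; exact djEB
  have hsp3' : Submodule.span F (Set.range (Sum.elim e g)) = LinearMap.range B := by
    rw [Set.Sum.elim_range, Submodule.span_union, hespan, hgspan, hYBsup]
  obtain ⟨zw, p3, hBzw, hli3, hsp3, hk3⟩ := vertex_decomp B (Sum.elim e g) hli3' hsp3'
  refine ⟨Fin (Module.finrank F ↥(LinearMap.range A ⊓ LinearMap.range B)) ⊕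
      (Fin (Module.finrank F ↥YA) ⊕ (Fin (Module.finrank F ↥YB) ⊕
      (Fin (Module.finrank F ↥Y0) ⊕ (Fin (Module.finrank F ↥(LinearMap.ker A)) ⊕
      Fin (Module.finrank F ↥(LinearMap.ker B)))))),
    inferInstance, inferInstance,
    fun i => (cOne i).elim ⊥ fun k => F ∙ (Sum.elim xy p1) k,
    fun i => (cTwo i).elim ⊥ fun k => F ∙ (Sum.elim e (Sum.elim f (Sum.elim g h))) k,
    fun i => (cThree i).elim ⊥ fun k => F ∙ (Sum.elim zw p3) k,
    internal_helper _ hli1 hsp1 cOne cOne_ex cOne_inj,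
    internal_helper _ hli2 hsp2 cTwo cTwo_ex cTwo_inj,
    internal_helper _ hli3 hsp3 cThree cThree_ex cThree_inj,
    ?_, ?_, ?_⟩
  · -- map A condition
    rintro (k | j | m | r | a | b)
    · show Submodule.map A (F ∙ xy (Sum.inl k)) ≤ F ∙ e k
      rw [map_span_single]
      have := hAxy (Sum.inl k)
      rw [this]
      exact le_rfl
    · show Submodule.map A (F ∙ xy (Sum.inr j)) ≤ F ∙ f j
      rw [map_span_single, hAxy (Sum.inr j)]
      exact le_rfl
    · show Submodule.map A ⊥ ≤ F ∙ g m
      rw [Submodule.map_bot]; exact bot_le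
    · show Submodule.map A ⊥ ≤ F ∙ h r
      rw [Submodule.map_bot]; exact bot_le
    · show Submodule.map A (F ∙ p1 a) ≤ ⊥
      rw [map_span_single, LinearMap.mem_ker.mp (hk1 a), Submodule.span_zero_singleton]
    · show Submodule.map A ⊥ ≤ ⊥
      rw [Submodule.map_bot]
  · -- map B condition
    rintro (k | j | m | r | a | b)
    · show Submodule.map B (F ∙ zw (Sum.inl k)) ≤ F ∙ e k
      rw [map_span_single, hBzw (Sum.inl k)]
      exact le_rfl
    · show Submodule.map B ⊥ ≤ F ∙ f j
      rw [Submodule.map_bot]; exact bot_le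
    · show Submodule.map B (F ∙ zw (Sum.inr m)) ≤ F ∙ g m
      rw [map_span_single, hBzw (Sum.inr m)]
      exact le_rfl
    · show Submodule.map B ⊥ ≤ F ∙ h r
      rw [Submodule.map_bot]; exact bot_le
    · show Submodule.map B ⊥ ≤ ⊥
      rw [Submodule.map_bot]
    · show Submodule.map B (F ∙ p3 b) ≤ ⊥
      rw [map_span_single, LinearMap.mem_ker.mp (hk3 b), Submodule.span_zero_singleton]
  · -- classification
    rintro (k | j | m | r | a | b)
    · -- L₁₃
      refine Or.inr (Or.inr (Or.inr (Or.inr (Or.inr ⟨?_, ?_, ?_, ?_, ?_⟩))))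
      · exact finrank_span_singleton (hli1.ne_zero (Sum.inl (Sum.inl k)))
      · exact finrank_span_singleton (hli2.ne_zero (Sum.inl k))
      · exact finrank_span_singleton (hli3.ne_zero (Sum.inl (Sum.inl k)))
      · show Submodule.map A (F ∙ xy (Sum.inl k)) = F ∙ e k
        rw [map_span_single, hAxy (Sum.inl k)]; rfl
      · show Submodule.map B (F ∙ zw (Sum.inl k)) = F ∙ e k
        rw [map_span_single, hBzw (Sum.inl k)]; rfl
    · -- L₁₂
      refine Or.inr (Or.inr (Or.inr (Or.inl ⟨?_, ?_, rfl, ?_⟩)))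
      · exact finrank_span_singleton (hli1.ne_zero (Sum.inl (Sum.inr j)))
      · exact finrank_span_singleton (hli2.ne_zero (Sum.inr (Sum.inl j)))
      · show Submodule.map A (F ∙ xy (Sum.inr j)) = F ∙ f j
        rw [map_span_single, hAxy (Sum.inr j)]; rfl
    · -- L₂₃
      refine Or.inr (Or.inr (Or.inr (Or.inr (Or.inl ⟨rfl, ?_, ?_, ?_⟩))))
      · exact finrank_span_singleton (hli2.ne_zero (Sum.inr (Sum.inr (Sum.inl m))))
      · exact finrank_span_singleton (hli3.ne_zero (Sum.inl (Sum.inr m)))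
      · show Submodule.map B (F ∙ zw (Sum.inr m)) = F ∙ g m
        rw [map_span_single, hBzw (Sum.inr m)]; rfl
    · -- L₂₂
      refine Or.inr (Or.inl ⟨rfl, ?_, rfl⟩)
      exact finrank_span_singleton (hli2.ne_zero (Sum.inr (Sum.inr (Sum.inr r))))
    · -- L₁₁
      refine Or.inl ⟨?_, rfl, rfl⟩
      exact finrank_span_singleton (hli1.ne_zero (Sum.inr a))
    · -- L₃₃
      refine Or.inr (Or.inr (Or.inl ⟨rfl, rfl, ?_⟩))
      exact finrank_span_singleton (hli3.ne_zero (Sum.inr b))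
end

section
/- Let A : U₁ → U₂ and B : U₃ → U₂ be linear maps of finite-dimensional vector spaces over a field F, and let A' : V₁ → V₂, B' : V₃ → V₂ be another such pair. If dim Uᵢ = dim Vᵢ for i = 1,2,3, rank A = rank A', rank B = rank B', and dim(range A ∩ range B) = dim(range A' ∩ range B'), then there exist linear bijections φᵢ : Uᵢ → Vᵢ (i = 1,2,3) with φ₂ ∘ A = A' ∘ φ₁ and φ₂ ∘ B = B' ∘ φ₃. -/
open Module Submodule

section Aux

variable {F M M' : Type*} [Field F] [AddCommGroup M] [Module F M]
  [AddCommGroup M'] [Module F M']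

/-- Glue componentwise equivalences of internal direct sum decompositions. -/
lemma grandGlue {ι : Type*} [DecidableEq ι] (p : ι → Submodule F M)
    (p' : ι → Submodule F M') (h : DirectSum.IsInternal p) (h' : DirectSum.IsInternal p')
    (e : ∀ i, p i ≃ₗ[F] p' i) :
    ∃ E : M ≃ₗ[F] M', ∀ i (x : p i), E x = e i x := by
  let g := LinearEquiv.ofBijective (DirectSum.coeLinearMap p) h
  let g' := LinearEquiv.ofBijective (DirectSum.coeLinearMap p') h'
  let m : DirectSum ι (fun i => p i) ≃ₗ[F] DirectSum ι (fun i => p' i) :=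
    DFinsupp.mapRange.linearEquiv fun i => e i
  refine ⟨g.symm.trans (m.trans g'), fun i x => ?_⟩
  have hx : (x : M) = g (DirectSum.of (fun i => p i) i x) :=
    (DirectSum.coeLinearMap_of p i x).symm
  simp only [LinearEquiv.trans_apply, hx, LinearEquiv.symm_apply_apply]
  have hm : m (DirectSum.of (fun i => p i) i x) = DirectSum.of (fun i => p' i) i (e i x) := by
    show DFinsupp.mapRange.linearEquiv (fun i => e i) (DFinsupp.single i x) =
      DFinsupp.single i (e i x)
    have : DFinsupp.mapRange.linearEquiv (fun i => e i) (DFinsupp.single i x) =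
        DFinsupp.mapRange (fun i (y : p i) => e i y) (fun i => map_zero (e i))
          (DFinsupp.single i x) := rfl
    rw [this, DFinsupp.mapRange_single]
  rw [hm]
  exact DirectSum.coeLinearMap_of p' i (e i x)

/-- If an equivalence agrees with an equivalence of submodules pointwise, then it maps the
submodule onto the other one. -/
lemma mapOfPointwise {p : Submodule F M} {p' : Submodule F M'} (E : M ≃ₗ[F] M')
    (ep : p ≃ₗ[F] p') (hp : ∀ x : p, E x = ep x) :
    Submodule.map (E : M →ₗ[F] M') p = p' := by
  ext y
  simp only [Submodule.mem_map]
  constructor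
  · rintro ⟨x, hx, rfl⟩
    rw [show (x : M) = ((⟨x, hx⟩ : p) : M) from rfl, show E.toLinearMap x = E x from rfl,
      hp ⟨x, hx⟩]
    exact (ep ⟨x, hx⟩).2
  · intro hy
    refine ⟨(ep.symm ⟨y, hy⟩ : M), (ep.symm ⟨y, hy⟩).2, ?_⟩
    show E _ = y
    rw [hp (ep.symm ⟨y, hy⟩), ep.apply_symm_apply]

/-- Relative complement: a complement of `I` inside `P`. -/
lemma relCompl {I P : Submodule F M} (h : I ≤ P) :
    ∃ C : Submodule F M, C ≤ P ∧ I ⊓ C = ⊥ ∧ I ⊔ C = P := by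
  obtain ⟨C₀, hC₀⟩ := Submodule.exists_isCompl (Submodule.comap P.subtype I)
  refine ⟨Submodule.map P.subtype C₀, Submodule.map_subtype_le _ _, ?_, ?_⟩
  · rw [eq_bot_iff]
    rintro x ⟨hxI, hxC⟩
    obtain ⟨⟨y, hyP⟩, hyC₀, rfl⟩ := hxC
    have : (⟨y, hyP⟩ : P) ∈ Submodule.comap P.subtype I ⊓ C₀ := ⟨hxI, hyC₀⟩
    rw [hC₀.inf_eq_bot] at this
    simpa using congrArg (Subtype.val) this
  · have := congrArg (Submodule.map P.subtype) hC₀.sup_eq_top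
    rwa [Submodule.map_sup, Submodule.map_comap_subtype, inf_eq_right.mpr h,
      Submodule.map_subtype_top] at this

/-- Glue for a pair of complementary submodules, with pointwise control. -/
lemma pairGlue {p q : Submodule F M} {p' q' : Submodule F M'} (h : IsCompl p q)
    (h' : IsCompl p' q') (ep : p ≃ₗ[F] p') (eq' : q ≃ₗ[F] q') :
    ∃ E : M ≃ₗ[F] M', (∀ x : p, E x = ep x) ∧ (∀ y : q, E y = eq' y) := by
  refine ⟨(Submodule.prodEquivOfIsCompl p q h).symm.trans
    ((ep.prodCongr eq').trans (Submodule.prodEquivOfIsCompl p' q' h')), ?_, ?_⟩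
  · intro x
    simp [Submodule.prodEquivOfIsCompl_symm_apply_left p q h]
  · intro y
    simp [Submodule.prodEquivOfIsCompl_symm_apply_right p q h]

/-- Restriction of a linear map to a complement of its kernel is an equivalence onto the range. -/
lemma kerComplEquiv {N : Type*} [AddCommGroup N] [Module F N] (A : M →ₗ[F] N)
    (W : Submodule F M) (hW : IsCompl (LinearMap.ker A) W) :
    ∃ e : W ≃ₗ[F] LinearMap.range A, ∀ w : W, (e w : N) = A w := by
  refine ⟨LinearEquiv.ofBijective
    ((A.domRestrict W).codRestrict (LinearMap.range A)
      (fun w => LinearMap.mem_range.2 ⟨w, rfl⟩)) ⟨?_, ?_⟩, fun w => rfl⟩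
  · intro x y hxy
    have h0 : A ((x : M) - y) = 0 := by
      have := congrArg Subtype.val hxy
      simp only [LinearMap.codRestrict_apply, LinearMap.domRestrict_apply] at this
      simp [map_sub, this]
    have : (x : M) - y ∈ LinearMap.ker A ⊓ W :=
      ⟨LinearMap.mem_ker.2 h0, sub_mem x.2 y.2⟩
    rw [hW.inf_eq_bot] at this
    exact Subtype.ext (by simpa [sub_eq_zero] using this)
  · rintro ⟨y, hy⟩
    obtain ⟨x, rfl⟩ := hy
    have hx : x ∈ LinearMap.ker A ⊔ W := hW.sup_eq_top ▸ Submodule.mem_top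
    obtain ⟨k, hk, w, hw, rfl⟩ := Submodule.mem_sup.1 hx
    exact ⟨⟨w, hw⟩, Subtype.ext (by simp [LinearMap.mem_ker.1 hk])⟩

/-- One-sided compatibility: given `E` mapping `range A` onto `range A'`, build `φ` on sources. -/
lemma oneSide {U₁ U₂ V₁ V₂ : Type*}
    [AddCommGroup U₁] [Module F U₁] [FiniteDimensional F U₁]
    [AddCommGroup U₂] [Module F U₂] [FiniteDimensional F U₂]
    [AddCommGroup V₁] [Module F V₁] [FiniteDimensional F V₁]
    [AddCommGroup V₂] [Module F V₂] [FiniteDimensional F V₂]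
    (A : U₁ →ₗ[F] U₂) (A' : V₁ →ₗ[F] V₂) (E : U₂ ≃ₗ[F] V₂)
    (hmap : Submodule.map (E : U₂ →ₗ[F] V₂) (LinearMap.range A) = LinearMap.range A')
    (h1 : Module.finrank F U₁ = Module.finrank F V₁) :
    ∃ φ : U₁ ≃ₗ[F] V₁, ∀ x, E (A x) = A' (φ x) := by
  obtain ⟨W, hW⟩ := Submodule.exists_isCompl (LinearMap.ker A)
  obtain ⟨W', hW'⟩ := Submodule.exists_isCompl (LinearMap.ker A')
  obtain ⟨eA, heA⟩ := kerComplEquiv A W hW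
  obtain ⟨eA', heA'⟩ := kerComplEquiv A' W' hW'
  let mid : (LinearMap.range A : Submodule F U₂) ≃ₗ[F] LinearMap.range A' :=
    (E.submoduleMap (LinearMap.range A)).trans (LinearEquiv.ofEq _ _ hmap)
  have hmid : ∀ z : LinearMap.range A, (mid z : V₂) = E z := fun z => rfl
  let eW : W ≃ₗ[F] W' := eA.trans (mid.trans eA'.symm)
  have hrk : Module.finrank F (LinearMap.range A) = Module.finrank F (LinearMap.range A') := by
    rw [← hmap, LinearEquiv.finrank_map_eq]
  have hker : Module.finrank F (LinearMap.ker A) = Module.finrank F (LinearMap.ker A') := by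
    have r1 := LinearMap.finrank_range_add_finrank_ker A
    have r2 := LinearMap.finrank_range_add_finrank_ker A'
    omega
  let eK : (LinearMap.ker A : Submodule F U₁) ≃ₗ[F] LinearMap.ker A' :=
    LinearEquiv.ofFinrankEq _ _ hker
  obtain ⟨φ, hφK, hφW⟩ := pairGlue hW hW' eK eW
  refine ⟨φ, fun x => ?_⟩
  have hx : x ∈ LinearMap.ker A ⊔ W := hW.sup_eq_top ▸ Submodule.mem_top
  obtain ⟨k, hk, w, hw, rfl⟩ := Submodule.mem_sup.1 hx
  have hAk : A k = 0 := LinearMap.mem_ker.1 hk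
  have hA'k : A' ((eK ⟨k, hk⟩ : V₁)) = 0 := LinearMap.mem_ker.1 (eK ⟨k, hk⟩).2
  have hφ : φ (k + w) = (eK ⟨k, hk⟩ : V₁) + (eW ⟨w, hw⟩ : V₁) := by
    rw [map_add, show φ k = eK ⟨k, hk⟩ from hφK ⟨k, hk⟩,
      show φ w = eW ⟨w, hw⟩ from hφW ⟨w, hw⟩]
  rw [hφ]
  rw [show A (k + w) = A w by rw [map_add, hAk, zero_add]]
  rw [show A' ((eK ⟨k, hk⟩ : V₁) + (eW ⟨w, hw⟩ : V₁)) = A' ((eW ⟨w, hw⟩ : V₁)) by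
    rw [map_add, hA'k, zero_add]]
  have : A' ((eW ⟨w, hw⟩ : V₁)) = (eA' (eW ⟨w, hw⟩) : V₂) := (heA' _).symm
  rw [this]
  show E (A w) = _
  have : eA' (eW ⟨w, hw⟩) = mid (eA ⟨w, hw⟩) := by
    simp [eW, LinearEquiv.apply_symm_apply]
  rw [this, hmid, heA]

/-- The four pieces of the decomposition form an internal direct sum. -/
lemma fourIndep (P Q CA CB D : Submodule F M)
    (hCAinf : P ⊓ Q ⊓ CA = ⊥) (hCAsup : P ⊓ Q ⊔ CA = P) (hCAle : CA ≤ P)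
    (hCBinf : P ⊓ Q ⊓ CB = ⊥) (hCBsup : P ⊓ Q ⊔ CB = Q) (hCBle : CB ≤ Q)
    (hD : IsCompl (P ⊔ Q) D) :
    DirectSum.IsInternal ![P ⊓ Q, CA, CB, D] := by
  rw [DirectSum.isInternal_submodule_iff_iSupIndep_and_iSup_eq_top]
  have hIP : P ⊓ Q ≤ P := inf_le_left
  have hIQ : P ⊓ Q ≤ Q := inf_le_right
  have hDdisj : ∀ x ∈ P ⊔ Q, x ∈ D → x = 0 := Submodule.disjoint_def.1 hD.disjoint
  have d0 : Disjoint (P ⊓ Q) (CA ⊔ (CB ⊔ D)) := by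
    rw [Submodule.disjoint_def]
    intro x hx hx2
    obtain ⟨a, ha, y, hy, rfl⟩ := Submodule.mem_sup.1 hx2
    obtain ⟨b, hb, d, hd, rfl⟩ := Submodule.mem_sup.1 hy
    have hd0 : d = 0 := by
      refine hDdisj d ?_ hd
      have hde : d = (a + (b + d)) - a - b := by abel
      rw [hde]
      exact sub_mem (sub_mem ((le_sup_left : P ≤ P ⊔ Q) hx.1)
        ((le_sup_left : P ≤ P ⊔ Q) (hCAle ha))) ((le_sup_right : Q ≤ P ⊔ Q) (hCBle hb))
    subst hd0
    have hb0 : b = 0 := by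
      have hbI : b ∈ P ⊓ Q := by
        refine ⟨?_, hCBle hb⟩
        have hbe : b = (a + (b + 0)) - a := by abel
        rw [hbe]
        exact sub_mem hx.1 (hCAle ha)
      have : b ∈ P ⊓ Q ⊓ CB := ⟨hbI, hb⟩
      rwa [hCBinf, Submodule.mem_bot] at this
    subst hb0
    have he : a + (0 + 0) = a := by abel
    rw [he] at hx ⊢
    have : a ∈ P ⊓ Q ⊓ CA := ⟨hx, ha⟩
    rwa [hCAinf, Submodule.mem_bot] at this
  have d1 : Disjoint CA (P ⊓ Q ⊔ (CB ⊔ D)) := by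
    rw [Submodule.disjoint_def]
    intro x hx hx2
    obtain ⟨a, ha, y, hy, rfl⟩ := Submodule.mem_sup.1 hx2
    obtain ⟨b, hb, d, hd, rfl⟩ := Submodule.mem_sup.1 hy
    have hd0 : d = 0 := by
      refine hDdisj d ?_ hd
      have hde : d = (a + (b + d)) - a - b := by abel
      rw [hde]
      exact sub_mem (sub_mem ((le_sup_left : P ≤ P ⊔ Q) (hCAle hx))
        ((le_sup_left : P ≤ P ⊔ Q) (hIP ha))) ((le_sup_right : Q ≤ P ⊔ Q) (hCBle hb))
    subst hd0
    have hb0 : b = 0 := by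
      have hbI : b ∈ P ⊓ Q := by
        refine ⟨?_, hCBle hb⟩
        have hbe : b = (a + (b + 0)) - a := by abel
        rw [hbe]
        exact sub_mem (hCAle hx) (hIP ha)
      have : b ∈ P ⊓ Q ⊓ CB := ⟨hbI, hb⟩
      rwa [hCBinf, Submodule.mem_bot] at this
    subst hb0
    have he : a + (0 + 0) = a := by abel
    rw [he] at hx ⊢
    have : a ∈ P ⊓ Q ⊓ CA := ⟨ha, hx⟩
    rwa [hCAinf, Submodule.mem_bot] at this
  have d2 : Disjoint CB (P ⊓ Q ⊔ (CA ⊔ D)) := by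
    rw [Submodule.disjoint_def]
    intro x hx hx2
    obtain ⟨a, ha, y, hy, rfl⟩ := Submodule.mem_sup.1 hx2
    obtain ⟨b, hb, d, hd, rfl⟩ := Submodule.mem_sup.1 hy
    have hd0 : d = 0 := by
      refine hDdisj d ?_ hd
      have hde : d = (a + (b + d)) - a - b := by abel
      rw [hde]
      exact sub_mem (sub_mem ((le_sup_right : Q ≤ P ⊔ Q) (hCBle hx))
        ((le_sup_left : P ≤ P ⊔ Q) (hIP ha))) ((le_sup_left : P ≤ P ⊔ Q) (hCAle hb))
    subst hd0
    have hb0 : b = 0 := by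
      have hbI : b ∈ P ⊓ Q := by
        refine ⟨hCAle hb, ?_⟩
        have hbe : b = (a + (b + 0)) - a := by abel
        rw [hbe]
        exact sub_mem (hCBle hx) (hIQ ha)
      have : b ∈ P ⊓ Q ⊓ CA := ⟨hbI, hb⟩
      rwa [hCAinf, Submodule.mem_bot] at this
    subst hb0
    have he : a + (0 + 0) = a := by abel
    rw [he] at hx ⊢
    have : a ∈ P ⊓ Q ⊓ CB := ⟨ha, hx⟩
    rwa [hCBinf, Submodule.mem_bot] at this
  have d3 : Disjoint D (P ⊓ Q ⊔ (CA ⊔ CB)) := by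
    refine Disjoint.mono_right ?_ hD.disjoint.symm
    exact sup_le (le_trans hIP le_sup_left)
      (sup_le (le_trans hCAle le_sup_left) (le_trans hCBle le_sup_right))
  constructor
  · rw [iSupIndep_def]
    intro i
    fin_cases i
    · refine d0.mono_right (iSup_le fun j => iSup_le fun hj => ?_)
      fin_cases j
      · exact absurd rfl hj
      · exact le_sup_left
      · exact le_sup_of_le_right le_sup_left
      · exact le_sup_of_le_right le_sup_right
    · refine d1.mono_right (iSup_le fun j => iSup_le fun hj => ?_)
      fin_cases j
      · exact le_sup_left
      · exact absurd rfl hj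
      · exact le_sup_of_le_right le_sup_left
      · exact le_sup_of_le_right le_sup_right
    · refine d2.mono_right (iSup_le fun j => iSup_le fun hj => ?_)
      fin_cases j
      · exact le_sup_left
      · exact le_sup_of_le_right le_sup_left
      · exact absurd rfl hj
      · exact le_sup_of_le_right le_sup_right
    · refine d3.mono_right (iSup_le fun j => iSup_le fun hj => ?_)
      fin_cases j
      · exact le_sup_left
      · exact le_sup_of_le_right le_sup_left
      · exact le_sup_of_le_right le_sup_right
      · exact absurd rfl hj
  · have htop : P ⊓ Q ⊔ (CA ⊔ (CB ⊔ D)) = ⊤ := by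
      rw [← sup_assoc, hCAsup, ← sup_assoc]
      rw [show P ⊔ CB = P ⊔ Q by rw [← hCBsup, ← sup_assoc, sup_eq_left.mpr hIP]]
      exact hD.sup_eq_top
    rw [eq_top_iff, ← htop]
    refine sup_le ?_ (sup_le ?_ (sup_le ?_ ?_))
    · exact le_iSup ![P ⊓ Q, CA, CB, D] 0
    · exact le_iSup ![P ⊓ Q, CA, CB, D] 1
    · exact le_iSup ![P ⊓ Q, CA, CB, D] 2
    · exact le_iSup ![P ⊓ Q, CA, CB, D] 3

end Aux

theorem stmt_12 {F : Type*} [Field F] {U₁ U₂ U₃ V₁ V₂ V₃ : Type*}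
    [AddCommGroup U₁] [Module F U₁] [FiniteDimensional F U₁]
    [AddCommGroup U₂] [Module F U₂] [FiniteDimensional F U₂]
    [AddCommGroup U₃] [Module F U₃] [FiniteDimensional F U₃]
    [AddCommGroup V₁] [Module F V₁] [FiniteDimensional F V₁]
    [AddCommGroup V₂] [Module F V₂] [FiniteDimensional F V₂]
    [AddCommGroup V₃] [Module F V₃] [FiniteDimensional F V₃]
    (A : U₁ →ₗ[F] U₂) (B : U₃ →ₗ[F] U₂) (A' : V₁ →ₗ[F] V₂) (B' : V₃ →ₗ[F] V₂)
    (h1 : Module.finrank F U₁ = Module.finrank F V₁)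
    (h2 : Module.finrank F U₂ = Module.finrank F V₂)
    (h3 : Module.finrank F U₃ = Module.finrank F V₃)
    (hA : Module.finrank F (LinearMap.range A) = Module.finrank F (LinearMap.range A'))
    (hB : Module.finrank F (LinearMap.range B) = Module.finrank F (LinearMap.range B'))
    (hAB : Module.finrank F ↥(LinearMap.range A ⊓ LinearMap.range B) =
           Module.finrank F ↥(LinearMap.range A' ⊓ LinearMap.range B')) :
    ∃ (φ₁ : U₁ ≃ₗ[F] V₁) (φ₂ : U₂ ≃ₗ[F] V₂) (φ₃ : U₃ ≃ₗ[F] V₃),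
      (∀ x, φ₂ (A x) = A' (φ₁ x)) ∧ (∀ x, φ₂ (B x) = B' (φ₃ x)) := by
  classical
  set P := LinearMap.range A with hP
  set Q := LinearMap.range B with hQ
  set P' := LinearMap.range A' with hP'
  set Q' := LinearMap.range B' with hQ'
  obtain ⟨CA, hCAle, hCAinf, hCAsup⟩ := relCompl (inf_le_left : P ⊓ Q ≤ P)
  obtain ⟨CB, hCBle, hCBinf, hCBsup⟩ := relCompl (inf_le_right : P ⊓ Q ≤ Q)
  obtain ⟨D, hD⟩ := Submodule.exists_isCompl (P ⊔ Q)
  obtain ⟨CA', hCAle', hCAinf', hCAsup'⟩ := relCompl (inf_le_left : P' ⊓ Q' ≤ P')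
  obtain ⟨CB', hCBle', hCBinf', hCBsup'⟩ := relCompl (inf_le_right : P' ⊓ Q' ≤ Q')
  obtain ⟨D', hD'⟩ := Submodule.exists_isCompl (P' ⊔ Q')
  have hint : DirectSum.IsInternal ![P ⊓ Q, CA, CB, D] :=
    fourIndep P Q CA CB D hCAinf hCAsup hCAle hCBinf hCBsup hCBle hD
  have hint' : DirectSum.IsInternal ![P' ⊓ Q', CA', CB', D'] :=
    fourIndep P' Q' CA' CB' D' hCAinf' hCAsup' hCAle' hCBinf' hCBsup' hCBle' hD'
  -- dimension bookkeeping
  have dimCA : finrank F CA + finrank F (P ⊓ Q : Submodule F U₂) = finrank F P := by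
    have := Submodule.finrank_sup_add_finrank_inf_eq (P ⊓ Q) CA
    rw [hCAsup, hCAinf, finrank_bot] at this
    omega
  have dimCB : finrank F CB + finrank F (P ⊓ Q : Submodule F U₂) = finrank F Q := by
    have := Submodule.finrank_sup_add_finrank_inf_eq (P ⊓ Q) CB
    rw [hCBsup, hCBinf, finrank_bot] at this
    omega
  have dimCA' : finrank F CA' + finrank F (P' ⊓ Q' : Submodule F V₂) = finrank F P' := by
    have := Submodule.finrank_sup_add_finrank_inf_eq (P' ⊓ Q') CA'
    rw [hCAsup', hCAinf', finrank_bot] at this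
    omega
  have dimCB' : finrank F CB' + finrank F (P' ⊓ Q' : Submodule F V₂) = finrank F Q' := by
    have := Submodule.finrank_sup_add_finrank_inf_eq (P' ⊓ Q') CB'
    rw [hCBsup', hCBinf', finrank_bot] at this
    omega
  have dimD : finrank F (P ⊔ Q : Submodule F U₂) + finrank F D = finrank F U₂ :=
    Submodule.finrank_add_eq_of_isCompl hD
  have dimD' : finrank F (P' ⊔ Q' : Submodule F V₂) + finrank F D' = finrank F V₂ :=
    Submodule.finrank_add_eq_of_isCompl hD'
  have dimS := Submodule.finrank_sup_add_finrank_inf_eq P Q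
  have dimS' := Submodule.finrank_sup_add_finrank_inf_eq P' Q'
  -- componentwise equivalences
  have e0 : (↥(P ⊓ Q)) ≃ₗ[F] ↥(P' ⊓ Q') := LinearEquiv.ofFinrankEq _ _ hAB
  have e1 : (↥CA) ≃ₗ[F] ↥CA' :=
    LinearEquiv.ofFinrankEq _ _ (show finrank F CA = finrank F CA' by omega)
  have e2 : (↥CB) ≃ₗ[F] ↥CB' :=
    LinearEquiv.ofFinrankEq _ _ (show finrank F CB = finrank F CB' by omega)
  have e3 : (↥D) ≃ₗ[F] ↥D' :=
    LinearEquiv.ofFinrankEq _ _ (show finrank F D = finrank F D' by omega)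
  have e : ∀ i, (![P ⊓ Q, CA, CB, D] i : Submodule F U₂) ≃ₗ[F]
      (![P' ⊓ Q', CA', CB', D'] i : Submodule F V₂) := fun i =>
    match i with
    | 0 => e0
    | 1 => e1
    | 2 => e2
    | 3 => e3
  obtain ⟨E, hE⟩ := grandGlue _ _ hint hint' e
  have hEmap : ∀ i, Submodule.map (E : U₂ →ₗ[F] V₂) (![P ⊓ Q, CA, CB, D] i) =
      ![P' ⊓ Q', CA', CB', D'] i := fun i => mapOfPointwise E (e i) (hE i)
  have hmapA : Submodule.map (E : U₂ →ₗ[F] V₂) P = P' := by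
    rw [← hCAsup, ← hCAsup', Submodule.map_sup]
    rw [show Submodule.map (E : U₂ →ₗ[F] V₂) (P ⊓ Q) = P' ⊓ Q' from hEmap 0,
      show Submodule.map (E : U₂ →ₗ[F] V₂) CA = CA' from hEmap 1]
  have hmapB : Submodule.map (E : U₂ →ₗ[F] V₂) Q = Q' := by
    rw [← hCBsup, ← hCBsup', Submodule.map_sup]
    rw [show Submodule.map (E : U₂ →ₗ[F] V₂) (P ⊓ Q) = P' ⊓ Q' from hEmap 0,
      show Submodule.map (E : U₂ →ₗ[F] V₂) CB = CB' from hEmap 2]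
  obtain ⟨φ₁, hφ₁⟩ := oneSide A A' E hmapA h1
  obtain ⟨φ₃, hφ₃⟩ := oneSide B B' E hmapB h3
  exact ⟨φ₁, E, φ₃, hφ₁, hφ₃⟩
end

section
/- Let S₂ = diag(C₁, C₂, C₃) be a block-diagonal unitary 3m × 3m matrix, S₃ a unitary 2m × 2m matrix, and let X, Y be m × m matrices such that S₂ N_Y = N_X S₃, where N_X has block rows [I,0],[I,I],[I,X] and N_Y has block rows [I,0],[I,I],[I,Y]. Then C₁ = C₂ = C₃, S₃ = diag(C₁, C₁), and C₃ Y = X C₃; in particular X and Y are unitarily similar. -/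
/-- The block-diagonal matrix `diag(C₁, C₂, C₃)`. -/
noncomputable def bd3 {m : ℕ} (C : Fin 3 → Matrix (Fin m) (Fin m) ℂ) :
    Matrix (Fin 3 × Fin m) (Fin 3 × Fin m) ℂ :=
  Matrix.of fun p q => if p.1 = q.1 then C p.1 p.2 q.2 else 0

/-- The block-diagonal matrix `diag(C₁, C₂)`. -/
noncomputable def bd2 {m : ℕ} (C : Fin 2 → Matrix (Fin m) (Fin m) ℂ) :
    Matrix (Fin 2 × Fin m) (Fin 2 × Fin m) ℂ :=
  Matrix.of fun p q => if p.1 = q.1 then C p.1 p.2 q.2 else 0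

open ComplexOrder in
private lemma aux_star_mul_self_eq_zero {m : ℕ} {A : Matrix (Fin m) (Fin m) ℂ}
    (h : star A * A = 0) : A = 0 :=
  Matrix.conjTranspose_mul_self_eq_zero.mp (by rwa [Matrix.star_eq_conjTranspose] at h)

theorem stmt_16 {m : ℕ} (C₁ C₂ C₃ X Y : Matrix (Fin m) (Fin m) ℂ)
    (S₃ : Matrix (Fin 2 × Fin m) (Fin 2 × Fin m) ℂ)
    (hS₂ : bd3 ![C₁, C₂, C₃] ∈ Matrix.unitaryGroup (Fin 3 × Fin m) ℂ)
    (hS₃ : S₃ ∈ Matrix.unitaryGroup (Fin 2 × Fin m) ℂ)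
    (h : bd3 ![C₁, C₂, C₃] * Nblk m Y = Nblk m X * S₃) :
    C₁ = C₂ ∧ C₂ = C₃ ∧ S₃ = bd2 ![C₁, C₁] ∧ C₃ * Y = X * C₃ ∧
    ∃ C ∈ Matrix.unitaryGroup (Fin m) ℂ, C⁻¹ * X * C = Y := by
  set A : Fin 2 → Fin 2 → Matrix (Fin m) (Fin m) ℂ :=
    fun k j => Matrix.of fun a b => S₃ (k, a) (j, b) with hA
  -- block equations from h
  have hb : ∀ (i : Fin 3) (j : Fin 2),
      ![C₁, C₂, C₃] i * (![![1, 0], ![1, 1], ![(1 : Matrix (Fin m) (Fin m) ℂ), Y]] i j)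
      = ![![1, 0], ![1, 1], ![(1 : Matrix (Fin m) (Fin m) ℂ), X]] i 0 * A 0 j
        + ![![1, 0], ![1, 1], ![(1 : Matrix (Fin m) (Fin m) ℂ), X]] i 1 * A 1 j := by
    intro i j
    ext a b
    have h' := congrFun (congrFun h (i, a)) (j, b)
    simp only [Matrix.mul_apply, Matrix.add_apply, bd3, Nblk, Matrix.of_apply, hA,
      Fintype.sum_prod_type, ite_mul, zero_mul, Finset.sum_ite_eq, Finset.mem_univ, if_true,
      Finset.sum_ite_irrel, Finset.sum_const_zero,
      Fin.sum_univ_two] at h' ⊢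
    exact h'
  have e00 : A 0 0 = C₁ := by
    have := hb 0 0; simp at this; rw [this]
  have e01 : A 0 1 = 0 := by
    have := hb 0 1; simp at this; rw [this]
  have e10 : C₂ = A 0 0 + A 1 0 := by
    have := hb 1 0; simpa using this
  have e11 : A 1 1 = C₂ := by
    have := hb 1 1; simp [e01] at this; rw [this]
  have e20 : C₃ = A 0 0 + X * A 1 0 := by
    have := hb 2 0; simpa [Matrix.vecHead, Matrix.vecTail] using this
  have e21 : C₃ * Y = X * A 1 1 := by
    have := hb 2 1; simpa [e01, Matrix.vecHead, Matrix.vecTail] using this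
  -- unitarity of blocks of S₂
  have hS₂' : star (bd3 ![C₁, C₂, C₃]) * bd3 ![C₁, C₂, C₃] = 1 :=
    Matrix.mem_unitaryGroup_iff'.mp hS₂
  have hCu : ∀ i : Fin 3, star (![C₁, C₂, C₃] i) * ![C₁, C₂, C₃] i = 1 := by
    intro i
    ext a b
    have h' := congrFun (congrFun hS₂' (i, a)) (i, b)
    simp only [Matrix.mul_apply, Matrix.star_apply, Matrix.conjTranspose_apply, bd3,
      Matrix.of_apply, Fintype.sum_prod_type, Matrix.one_apply, Prod.mk.injEq,
      apply_ite (star : ℂ → ℂ), star_zero, ite_mul, mul_ite, zero_mul, mul_zero,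
      Finset.sum_ite_eq, Finset.sum_ite_eq', Finset.mem_univ, if_true] at h' ⊢
    simpa using h'
  -- unitarity block (0,0) of S₃
  have hSb : star (A 0 0) * A 0 0 + star (A 1 0) * A 1 0 = 1 := by
    have hS' : star S₃ * S₃ = 1 := Matrix.mem_unitaryGroup_iff'.mp hS₃
    ext a b
    have h' := congrFun (congrFun hS' (0, a)) (0, b)
    simp only [Matrix.mul_apply, Matrix.add_apply, Matrix.star_apply,
      Matrix.conjTranspose_apply, hA, Matrix.of_apply, Fintype.sum_prod_type,
      Fin.sum_univ_two, Matrix.one_apply, Prod.mk.injEq] at h' ⊢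
    simpa using h'
  have hA10 : A 1 0 = 0 := by
    have h1 : star (A 0 0) * A 0 0 = 1 := by rw [e00]; exact hCu 0
    have h2 : star (A 1 0) * A 1 0 = 0 := by
      have := hSb; rw [h1] at this; exact add_eq_left.mp this
    exact aux_star_mul_self_eq_zero h2
  have h12 : C₁ = C₂ := by rw [e10, e00, hA10, add_zero]
  have h13 : C₁ = C₃ := by rw [e20, e00, hA10, mul_zero, add_zero]
  have hXY : C₃ * Y = X * C₃ := by rw [e21, e11, ← h12, h13]
  refine ⟨h12, h12 ▸ h13, ?_, hXY, ?_⟩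
  · -- S₃ = bd2 ![C₁, C₁]
    ext ⟨i, a⟩ ⟨j, b⟩
    have key : ∀ (i j : Fin 2), S₃ (i, a) (j, b) = A i j a b := fun i j => rfl
    fin_cases i <;> fin_cases j <;>
      simp [bd2, key, e00, e01, hA10, e11, ← h12]
  · refine ⟨C₃, Matrix.mem_unitaryGroup_iff'.mpr ?_, ?_⟩
    · simpa using hCu 2
    · have hC3 : star C₃ * C₃ = 1 := by simpa using hCu 2
      haveI : Invertible C₃ := invertibleOfLeftInverse _ _ hC3
      rw [mul_assoc, ← hXY, Matrix.inv_mul_cancel_left_of_invertible]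
end
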